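/- m(8) ≤ 2·m(5)·m(3) + 8·m(3)² + 2^7 + C(8,4)/2. In particular, using m(5) ≤ 51 and m(3) = 7, m(8) ≤ 1269. -/

import Mathlib

/-- A family of finsets is `n`-uniform if every hyperedge has `n` elements. -/
def IsUniform (n : ℕ) (E : Finset (Finset ℕ)) : Prop := ∀ e ∈ E, e.card = n

/-- A hypergraph (family of hyperedges) is 2-colorable if there is a Red/Blue
coloring of the vertices such that no hyperedge is monochromatic. -/
def Colorable2 (E : Finset (Finset ℕ)) : Prop :=
  ∃ χ : ℕ → Bool, ∀ e ∈ E, (∃ v ∈ e, χ v = true) ∧ (∃ v ∈ e, χ v = false)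

/-- `m n` is the least number of hyperedges in a non-2-colorable `n`-uniform hypergraph. -/
noncomputable def m (n : ℕ) : ℕ :=
  sInf {k | ∃ E : Finset (Finset ℕ), IsUniform n E ∧ ¬ Colorable2 E ∧ E.card = k}

/-- A hyperedge is monochromatic under `χ` if all its vertices get the same color. -/
def Mono (χ : ℕ → Bool) (s : Finset ℕ) : Prop :=
  (∀ x ∈ s, χ x = true) ∨ (∀ x ∈ s, χ x = false)

/- ------------------------------------------------------------------
Auxiliary material for the proof of `m_eight_bound`.

The construction: take a minimum non-2-colorable 5-uniform hypergraph
`E5` (with `m 5` edges) and a minimum non-2-colorable 3-uniform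
hypergraph `E3` (with `m 3` edges).  Place a copy of `E5` on the
vertices `≡ 0 (mod 5)` and two copies of `E3` on the vertices
`≡ 1, 2 (mod 5)`, together with 8 auxiliary pairs `(5i+3, 5i+4)`,
`i < 8`.  The hyperedges are:
* `e ∪ f` for `e ∈ E5`, `f` in either copy of `E3`  (2·m5·m3 edges);
* `{aᵢ, bᵢ} ∪ f ∪ g` for each pair `i` and `f, g` in the two copies
  of `E3`  (8·m3² edges);
* the transversal edges picking one vertex of each auxiliary pair,
  taking `bᵢ` exactly on a set `s ⊆ range 8` with
  `s.card ∈ {1,3,4,6,8}`  (8 + 56 + 70 + 28 + 1 = 163 = 2⁷ + 35 edges).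
------------------------------------------------------------------ -/

namespace MEightAux

/-- embed a copy of a vertex set into the residue class `r` mod 5 -/
def emb (r : ℕ) (e : Finset ℕ) : Finset ℕ := e.image (fun v => 5*v+r)

/-- transversal edge through the 8 auxiliary pairs `(5i+3, 5i+4)` -/
def TT (s : Finset ℕ) : Finset ℕ :=
  (Finset.range 8).image (fun i => if i ∈ s then 5*i+4 else 5*i+3)

/-- the admissible numbers of `b`-type picks in a transversal edge -/
def WW : Finset ℕ := {1,3,4,6,8}

/-- the big 8-uniform hypergraph -/
def bigE (E5 E3 : Finset (Finset ℕ)) : Finset (Finset ℕ) :=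
  ((E5 ×ˢ E3).image (fun p => emb 0 p.1 ∪ emb 1 p.2) ∪
   (E5 ×ˢ E3).image (fun p => emb 0 p.1 ∪ emb 2 p.2)) ∪
  ((Finset.range 8 ×ˢ (E3 ×ˢ E3)).image
      (fun q => ({5*q.1+3, 5*q.1+4} : Finset ℕ) ∪ emb 1 q.2.1 ∪ emb 2 q.2.2) ∪
   ((Finset.range 8).powerset.filter (fun s => s.card ∈ WW)).image TT)

lemma emb_inj (r : ℕ) : Function.Injective (fun v => 5*v+r) := by
  intro a b h
  simp only [] at h
  omega

lemma emb_card (r : ℕ) (e : Finset ℕ) : (emb r e).card = e.card :=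
  Finset.card_image_of_injective _ (emb_inj r)

lemma mem_emb {r x : ℕ} {e : Finset ℕ} : x ∈ emb r e ↔ ∃ v ∈ e, 5*v+r = x := by
  simp [emb]

lemma emb_disjoint {r r' : ℕ} (hr : r < 5) (hr' : r' < 5) (h : r ≠ r')
    (e f : Finset ℕ) : Disjoint (emb r e) (emb r' f) := by
  rw [Finset.disjoint_left]
  intro x hx hx'
  obtain ⟨v, -, hv⟩ := mem_emb.mp hx
  obtain ⟨w, -, hw⟩ := mem_emb.mp hx'
  omega

lemma TT_card (s : Finset ℕ) : (TT s).card = 8 := by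
  rw [TT, Finset.card_image_of_injOn, Finset.card_range]
  intro i _ j _ h
  by_cases hi : i ∈ s <;> by_cases hj : j ∈ s <;> simp [hi, hj] at h <;> omega

lemma bigE_uniform (E5 E3 : Finset (Finset ℕ))
    (h5u : IsUniform 5 E5) (h3u : IsUniform 3 E3) :
    IsUniform 8 (bigE E5 E3) := by
  intro e he
  rw [bigE] at he
  rcases Finset.mem_union.mp he with he | he
  · rcases Finset.mem_union.mp he with he | he <;>
    · obtain ⟨⟨e5, f3⟩, hp, rfl⟩ := Finset.mem_image.mp he
      obtain ⟨h5, h3⟩ := Finset.mem_product.mp hp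
      rw [Finset.card_union_of_disjoint
          (emb_disjoint (by norm_num) (by norm_num) (by norm_num) _ _),
        emb_card, emb_card, h5u _ h5, h3u _ h3]
  · rcases Finset.mem_union.mp he with he | he
    · obtain ⟨⟨i, f, g⟩, hp, rfl⟩ := Finset.mem_image.mp he
      obtain ⟨hi, hfg⟩ := Finset.mem_product.mp hp
      obtain ⟨hf, hg⟩ := Finset.mem_product.mp hfg
      have d12 : Disjoint (emb 1 f) (emb 2 g) :=
        emb_disjoint (by norm_num) (by norm_num) (by norm_num) _ _
      have dp1 : Disjoint ({5*i+3, 5*i+4} : Finset ℕ) (emb 1 f) := by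
        rw [Finset.disjoint_left]
        intro x hx hx'
        obtain ⟨v, -, hv⟩ := mem_emb.mp hx'
        simp at hx; omega
      have dp2 : Disjoint ({5*i+3, 5*i+4} : Finset ℕ) (emb 2 g) := by
        rw [Finset.disjoint_left]
        intro x hx hx'
        obtain ⟨v, -, hv⟩ := mem_emb.mp hx'
        simp at hx; omega
      rw [Finset.union_assoc,
        Finset.card_union_of_disjoint (by
          rw [Finset.disjoint_union_right]; exact ⟨dp1, dp2⟩),
        Finset.card_union_of_disjoint d12, emb_card, emb_card,
        h3u _ hf, h3u _ hg]
      simp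
    · obtain ⟨s, -, rfl⟩ := Finset.mem_image.mp he
      exact TT_card s

lemma bigE_card (E5 E3 : Finset (Finset ℕ)) :
    (bigE E5 E3).card ≤ 2 * E5.card * E3.card + 8 * E3.card ^ 2 + 163 := by
  have h163 : ((Finset.range 8).powerset.filter (fun s => s.card ∈ WW)).card = 163 := by
    set_option maxRecDepth 10000 in decide
  have h1 := Finset.card_image_le (s := E5 ×ˢ E3) (f := fun p => emb 0 p.1 ∪ emb 1 p.2)
  have h2 := Finset.card_image_le (s := E5 ×ˢ E3) (f := fun p => emb 0 p.1 ∪ emb 2 p.2)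
  have h3 := Finset.card_image_le (s := Finset.range 8 ×ˢ (E3 ×ˢ E3))
      (f := fun q => ({5*q.1+3, 5*q.1+4} : Finset ℕ) ∪ emb 1 q.2.1 ∪ emb 2 q.2.2)
  have h4 := Finset.card_image_le (s := (Finset.range 8).powerset.filter (fun s => s.card ∈ WW))
      (f := TT)
  rw [Finset.card_product] at h1 h2
  rw [Finset.card_product, Finset.card_product, Finset.card_range] at h3
  rw [h163] at h4
  have hle : (bigE E5 E3).card ≤
      E5.card * E3.card + E5.card * E3.card + (8 * (E3.card * E3.card) + 163) := by
    refine (Finset.card_union_le _ _).trans ?_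
    exact add_le_add ((Finset.card_union_le _ _).trans (add_le_add h1 h2))
      ((Finset.card_union_le _ _).trans (add_le_add h3 h4))
  calc (bigE E5 E3).card ≤ _ := hle
    _ = 2 * E5.card * E3.card + 8 * E3.card ^ 2 + 163 := by ring

lemma arith_key : ∀ p ∈ Finset.range 9, ∀ q ∈ Finset.range 9, p ≤ q →
    (∃ w ∈ WW, p ≤ w ∧ w ≤ q) ∨ (p = q ∧ 8 - p ∈ WW) := by decide

lemma bool_flip {x c : Bool} (h : ¬ x = c) : x = !c := by
  cases x <;> cases c <;> simp_all

lemma bigE_noncol (E5 E3 : Finset (Finset ℕ))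
    (h5c : ¬ Colorable2 E5) (h3c : ¬ Colorable2 E3) :
    ¬ Colorable2 (bigE E5 E3) := by
  rintro ⟨χ, hχ⟩
  have noMono : ∀ e ∈ bigE E5 E3, ∀ c : Bool, ¬ (∀ v ∈ e, χ v = c) := by
    intro e he c hall
    obtain ⟨⟨v, hv, hvt⟩, ⟨w, hw, hwf⟩⟩ := hχ e he
    have h1 := hall v hv
    have h2 := hall w hw
    cases c <;> simp_all
  have getMono : ∀ (E : Finset (Finset ℕ)), ¬ Colorable2 E → ∀ (ψ : ℕ → Bool),
      ∃ e ∈ E, ∃ c : Bool, ∀ v ∈ e, ψ v = c := by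
    intro E hE ψ
    by_contra hcon
    push_neg at hcon
    refine hE ⟨ψ, fun e he => ?_⟩
    obtain ⟨v, hv, hvt⟩ := hcon e he false
    obtain ⟨w, hw, hwf⟩ := hcon e he true
    exact ⟨⟨v, hv, by simpa using hvt⟩, ⟨w, hw, by simpa using hwf⟩⟩
  -- a monochromatic edge of the 5-uniform part, of some color c0
  obtain ⟨e0, he0, c0, hc0⟩ := getMono E5 h5c (fun v => χ (5*v+0))
  -- monochromatic edges of the two 3-uniform copies
  obtain ⟨f1, hf1, c1, hc1⟩ := getMono E3 h3c (fun v => χ (5*v+1))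
  obtain ⟨f2, hf2, c2, hc2⟩ := getMono E3 h3c (fun v => χ (5*v+2))
  -- their colors must be !c0, otherwise an edge of the first two families is monochromatic
  have hc1' : c1 = !c0 := by
    rcases Bool.eq_or_eq_not c1 c0 with h | h
    · exfalso
      apply noMono (emb 0 e0 ∪ emb 1 f1) ?_ c0 ?_
      · refine Finset.mem_union_left _ (Finset.mem_union_left _ (Finset.mem_image.mpr
          ⟨(e0, f1), Finset.mem_product.mpr ⟨he0, hf1⟩, rfl⟩))
      · intro v hv
        rcases Finset.mem_union.mp hv with hv | hv
        · obtain ⟨w, hw, rfl⟩ := mem_emb.mp hv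
          exact hc0 w hw
        · obtain ⟨w, hw, rfl⟩ := mem_emb.mp hv
          rw [hc1 w hw, h]
    · exact h
  have hc2' : c2 = !c0 := by
    rcases Bool.eq_or_eq_not c2 c0 with h | h
    · exfalso
      apply noMono (emb 0 e0 ∪ emb 2 f2) ?_ c0 ?_
      · refine Finset.mem_union_left _ (Finset.mem_union_right _ (Finset.mem_image.mpr
          ⟨(e0, f2), Finset.mem_product.mpr ⟨he0, hf2⟩, rfl⟩))
      · intro v hv
        rcases Finset.mem_union.mp hv with hv | hv
        · obtain ⟨w, hw, rfl⟩ := mem_emb.mp hv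
          exact hc0 w hw
        · obtain ⟨w, hw, rfl⟩ := mem_emb.mp hv
          rw [hc2 w hw, h]
    · exact h
  -- every auxiliary pair has a vertex of color c0
  have hpair : ∀ i ∈ Finset.range 8, χ (5*i+3) = c0 ∨ χ (5*i+4) = c0 := by
    intro i hi
    by_contra hcon
    push_neg at hcon
    apply noMono (({5*i+3, 5*i+4} : Finset ℕ) ∪ emb 1 f1 ∪ emb 2 f2) ?_ (!c0) ?_
    · refine Finset.mem_union_right _ (Finset.mem_union_left _ (Finset.mem_image.mpr
        ⟨(i, f1, f2), Finset.mem_product.mpr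
          ⟨hi, Finset.mem_product.mpr ⟨hf1, hf2⟩⟩, rfl⟩))
    · intro v hv
      rcases Finset.mem_union.mp hv with hv | hv
      · rcases Finset.mem_union.mp hv with hv | hv
        · rcases Finset.mem_insert.mp hv with rfl | hv
          · exact bool_flip hcon.1
          · rw [Finset.mem_singleton.mp hv]
            exact bool_flip hcon.2
        · obtain ⟨w, hw, rfl⟩ := mem_emb.mp hv
          rw [hc1 w hw, hc1']
      · obtain ⟨w, hw, rfl⟩ := mem_emb.mp hv
        rw [hc2 w hw, hc2']
  -- the transversal edges finish the job
  classical
  set A := (Finset.range 8).filter (fun i => χ (5*i+3) = c0) with hA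
  set B := (Finset.range 8).filter (fun i => χ (5*i+4) = c0) with hB
  have hAr : A ⊆ Finset.range 8 := Finset.filter_subset _ _
  have hBr : B ⊆ Finset.range 8 := Finset.filter_subset _ _
  have hAB : Finset.range 8 \ A ⊆ B := by
    intro i hi
    rw [Finset.mem_sdiff] at hi
    obtain ⟨hir, hiA⟩ := hi
    rcases hpair i hir with h | h
    · exact absurd (Finset.mem_filter.mpr ⟨hir, h⟩) hiA
    · exact Finset.mem_filter.mpr ⟨hir, h⟩
  have hpq : (Finset.range 8 \ A).card ≤ B.card := Finset.card_le_card hAB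
  have hp8 : (Finset.range 8 \ A).card ≤ 8 := by
    have := Finset.card_le_card (Finset.sdiff_subset (s := Finset.range 8) (t := A))
    simpa using this
  have hq8 : B.card ≤ 8 := by simpa using Finset.card_le_card hBr
  have key := arith_key (Finset.range 8 \ A).card (Finset.mem_range.mpr (by omega))
      B.card (Finset.mem_range.mpr (by omega)) hpq
  rcases key with ⟨w, hwW, hpw, hwq⟩ | ⟨hpq0, hW⟩
  · -- there is an all-c0 transversal edge of size w
    obtain ⟨s, hs1, hs2, hscard⟩ :=
      Finset.exists_subsuperset_card_eq (n := w) hAB (by omega) (by omega)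
    have hsr : s ⊆ Finset.range 8 := hs2.trans hBr
    apply noMono (TT s) ?_ c0 ?_
    · refine Finset.mem_union_right _ (Finset.mem_union_right _ (Finset.mem_image.mpr
        ⟨s, Finset.mem_filter.mpr ⟨Finset.mem_powerset.mpr hsr, by rw [hscard]; exact hwW⟩, rfl⟩))
    · intro v hv
      obtain ⟨i, hi, rfl⟩ := Finset.mem_image.mp hv
      by_cases his : i ∈ s
      · simp only [his, if_true]
        exact (Finset.mem_filter.mp (hs2 his)).2
      · simp only [his, if_false]
        have hiA : i ∈ A := by
          by_contra hiA
          exact his (hs1 (Finset.mem_sdiff.mpr ⟨hi, hiA⟩))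
        exact (Finset.mem_filter.mp hiA).2
  · -- exact case: the transversal taking b's exactly on A is all-(!c0)
    have hBeq : Finset.range 8 \ A = B := Finset.eq_of_subset_of_card_le hAB (le_of_eq hpq0.symm)
    have hAcard : A.card = 8 - (Finset.range 8 \ A).card := by
      have := Finset.card_sdiff_of_subset hAr
      simp only [Finset.card_range] at this
      have hA8 : A.card ≤ 8 := by simpa using Finset.card_le_card hAr
      omega
    apply noMono (TT A) ?_ (!c0) ?_
    · refine Finset.mem_union_right _ (Finset.mem_union_right _ (Finset.mem_image.mpr
        ⟨A, Finset.mem_filter.mpr ⟨Finset.mem_powerset.mpr hAr, by rw [hAcard]; exact hW⟩, rfl⟩))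
    · intro v hv
      obtain ⟨i, hi, rfl⟩ := Finset.mem_image.mp hv
      by_cases hiA : i ∈ A
      · simp only [hiA, if_true]
        have hiB : i ∉ B := by
          rw [← hBeq]
          simp [hiA]
        refine bool_flip ?_
        intro h
        exact hiB (Finset.mem_filter.mpr ⟨hi, h⟩)
      · simp only [hiA, if_false]
        refine bool_flip ?_
        intro h
        exact hiA (Finset.mem_filter.mpr ⟨hi, h⟩)

/-- there always is a minimum non-2-colorable `n`-uniform hypergraph (e.g. the
complete `n`-uniform hypergraph on `2n-1` vertices is not 2-colorable). -/
lemma exists_witness (n : ℕ) (hn : 0 < n) :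
    ∃ E : Finset (Finset ℕ), IsUniform n E ∧ ¬ Colorable2 E ∧ E.card = m n := by
  have hne : {k | ∃ E : Finset (Finset ℕ), IsUniform n E ∧ ¬ Colorable2 E ∧ E.card = k}.Nonempty := by
    refine ⟨(Finset.powersetCard n (Finset.range (2*n-1))).card,
      Finset.powersetCard n (Finset.range (2*n-1)), ?_, ?_, rfl⟩
    · intro e he; exact (Finset.mem_powersetCard.mp he).2
    · rintro ⟨χ, hχ⟩
      set V := Finset.range (2*n-1) with hV
      have hsplit : (V.filter (fun v => χ v = true)).card
          + (V.filter (fun v => ¬ (χ v = true))).card = V.card :=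
        Finset.card_filter_add_card_filter_not _
      have hVcard : V.card = 2*n-1 := Finset.card_range _
      have hmaj : n ≤ (V.filter (fun v => χ v = true)).card
          ∨ n ≤ (V.filter (fun v => ¬ (χ v = true))).card := by omega
      rcases hmaj with h | h
      · obtain ⟨s, hs, hscard⟩ := Finset.exists_subset_card_eq h
        have hsV : s ⊆ V := hs.trans (Finset.filter_subset _ _)
        have hsE : s ∈ Finset.powersetCard n V := Finset.mem_powersetCard.mpr ⟨hsV, hscard⟩
        obtain ⟨-, w, hw, hwf⟩ := hχ s hsE
        have := (Finset.mem_filter.mp (hs hw)).2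
        simp [this] at hwf
      · obtain ⟨s, hs, hscard⟩ := Finset.exists_subset_card_eq h
        have hsV : s ⊆ V := hs.trans (Finset.filter_subset _ _)
        have hsE : s ∈ Finset.powersetCard n V := Finset.mem_powersetCard.mpr ⟨hsV, hscard⟩
        obtain ⟨⟨w, hw, hwt⟩, -⟩ := hχ s hsE
        have := (Finset.mem_filter.mp (hs hw)).2
        simp [hwt] at this
  exact Nat.sInf_mem hne

end MEightAux

/-- `m 8 ≤ 2·m(5)·m(3) + 8·m(3)² + 2^7 + C(8,4)/2`; in particular, using
`m 5 ≤ 51` and `m 3 = 7`, `m 8 ≤ 1269`. -/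
theorem m_eight_bound :
    (m 8 ≤ 2 * m 5 * m 3 + 8 * m 3 ^ 2 + 2 ^ 7 + Nat.choose 8 4 / 2) ∧
    (m 5 ≤ 51 → m 3 = 7 → m 8 ≤ 1269) := by
  have hch : (2 : ℕ) ^ 7 + Nat.choose 8 4 / 2 = 163 := by decide
  have main : m 8 ≤ 2 * m 5 * m 3 + 8 * m 3 ^ 2 + 163 := by
    obtain ⟨E5, h5u, h5c, h5card⟩ := MEightAux.exists_witness 5 (by norm_num)
    obtain ⟨E3, h3u, h3c, h3card⟩ := MEightAux.exists_witness 3 (by norm_num)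
    have hm : m 8 ≤ (MEightAux.bigE E5 E3).card :=
      Nat.sInf_le ⟨MEightAux.bigE E5 E3, MEightAux.bigE_uniform E5 E3 h5u h3u,
        MEightAux.bigE_noncol E5 E3 h5c h3c, rfl⟩
    calc m 8 ≤ (MEightAux.bigE E5 E3).card := hm
      _ ≤ 2 * E5.card * E3.card + 8 * E3.card ^ 2 + 163 := MEightAux.bigE_card E5 E3
      _ = 2 * m 5 * m 3 + 8 * m 3 ^ 2 + 163 := by rw [h5card, h3card]
  constructor
  · omega
  · intro h5 h3
    rw [h3] at main
    linarith
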